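/- Let (X,Y,E,F) be a bitournament with X and Y finite sets, and suppose it has no directed cycle. Then there exists an injective map f from the disjoint union X ⊎ Y into the natural numbers such that f(x) is even for every x ∈ X, f(y) is odd for every y ∈ Y, and for all x ∈ X and y ∈ Y: E x y holds if and only if f(x) < f(y), and F y x holds if and only if f(y) < f(x). (That is, every finite acyclic bitournament is isomorphic to the digraph D_S on some finite set S of natural numbers with an arc from a to b exactly when b > a and a, b have opposite parity.) -/

import Mathlib

section Aux

variable {X Y : Type*} (E : X → Y → Prop) (F : Y → X → Prop)

/-- The arc relation of the bitournament on `X ⊕ Y`. -/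
def btRel : X ⊕ Y → X ⊕ Y → Prop
  | Sum.inl x, Sum.inr y => E x y
  | Sum.inr y, Sum.inl x => F y x
  | _, _ => False

@[simp] lemma btRel_lr (x : X) (y : Y) : btRel E F (Sum.inl x) (Sum.inr y) ↔ E x y := Iff.rfl
@[simp] lemma btRel_rl (x : X) (y : Y) : btRel E F (Sum.inr y) (Sum.inl x) ↔ F y x := Iff.rfl
@[simp] lemma btRel_ll (x x' : X) : btRel E F (Sum.inl x) (Sum.inl x') ↔ False := Iff.rfl
@[simp] lemma btRel_rr (y y' : Y) : btRel E F (Sum.inr y) (Sum.inr y') ↔ False := Iff.rfl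

/-- Path extraction: a transitive-closure path starting at `inl x` yields explicit
alternating sequences. -/
lemma btRel_path (x : X) (b : X ⊕ Y) (h : Relation.TransGen (btRel E F) (Sum.inl x) b) :
    ∃ k, ∃ xs : ℕ → X, ∃ ys : ℕ → Y, xs 0 = x ∧
      (∀ i, i ≤ k → E (xs i) (ys i)) ∧ (∀ i, i < k → F (ys i) (xs (i + 1))) ∧
      (b = Sum.inr (ys k) ∨ (b = Sum.inl (xs (k + 1)) ∧ F (ys k) (xs (k + 1)))) := by
  classical
  induction h with
  | @single b hstep =>
    cases b with
    | inl x' => exact hstep.elim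
    | inr y' =>
      exact ⟨0, fun _ => x, fun _ => y', rfl, fun i _ => hstep, fun i hi => absurd hi (by omega),
        Or.inl rfl⟩
  | @tail b c h₁ hstep ih =>
    obtain ⟨k, xs, ys, hx0, hE, hF, hend⟩ := ih
    rcases hend with hb | ⟨hb, hFk⟩
    · subst hb
      cases c with
      | inr y'' => exact hstep.elim
      | inl x'' =>
        refine ⟨k, Function.update xs (k + 1) x'', ys, ?_, ?_, ?_, Or.inr ⟨?_, ?_⟩⟩
        · rw [Function.update_of_ne (by omega)]; exact hx0
        · intro i hi; rw [Function.update_of_ne (by omega)]; exact hE i hi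
        · intro i hi; rw [Function.update_of_ne (by omega)]; exact hF i hi
        · rw [Function.update_self]
        · rw [Function.update_self]; exact hstep
    · subst hb
      cases c with
      | inl x'' => exact hstep.elim
      | inr y'' =>
        refine ⟨k + 1, xs, Function.update ys (k + 1) y'', hx0, ?_, ?_,
          Or.inl (by rw [Function.update_self])⟩
        · intro i hi
          rcases Nat.lt_or_ge i (k + 1) with h' | h'
          · rw [Function.update_of_ne (by omega)]; exact hE i (by omega)
          · have : i = k + 1 := by omega
            subst this; rw [Function.update_self]; exact hstep
        · intro i hi
          rcases Nat.lt_or_ge i k with h' | h'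
          · rw [Function.update_of_ne (by omega)]; exact hF i h'
          · have : i = k := by omega
            subst this; rw [Function.update_of_ne (by omega)]; exact hFk

end Aux

theorem stmt_2 {X Y : Type*} [Fintype X] [Fintype Y]
    (E : X → Y → Prop) (F : Y → X → Prop)
    (hbt : ∀ (x : X) (y : Y), Xor' (E x y) (F y x))
    (hac : ∀ (k : ℕ) (x : Fin (k + 1) → X) (y : Fin (k + 1) → Y),
      ¬ ((∀ i, E (x i) (y i)) ∧ (∀ i, F (y i) (x (i + 1))))) :
    ∃ f : X ⊕ Y → ℕ, Function.Injective f ∧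
      (∀ x : X, Even (f (Sum.inl x))) ∧ (∀ y : Y, Odd (f (Sum.inr y))) ∧
      ∀ (x : X) (y : Y),
        (E x y ↔ f (Sum.inl x) < f (Sum.inr y)) ∧
        (F y x ↔ f (Sum.inr y) < f (Sum.inl x)) := by
  classical
  set r : X ⊕ Y → X ⊕ Y → Prop := btRel E F with hr
  -- no cycle through a left vertex
  have key : ∀ x : X, ¬ Relation.TransGen r (Sum.inl x) (Sum.inl x) := by
    intro x hcyc
    obtain ⟨k, xs, ys, hx0, hE, hF, hend⟩ := btRel_path E F x _ hcyc
    rcases hend with hb | ⟨hb, hFk⟩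
    · exact absurd hb (by simp)
    · have hxk : xs (k + 1) = x := by
        have := hb.symm
        exact (Sum.inl.injEq _ _).mp this
      refine hac k (fun i => xs i) (fun i => ys i)
        ⟨fun i => hE i (Nat.lt_succ_iff.mp i.isLt), fun i => ?_⟩
      show F (ys i) (xs ((i + 1 : Fin (k + 1)) : ℕ))
      rcases Nat.lt_or_ge i.val k with h' | h'
      · have hv : ((i + 1 : Fin (k + 1)) : ℕ) = i.val + 1 :=
          Fin.val_add_one_of_lt (by rw [Fin.lt_iff_val_lt_val]; simpa using h')
        rw [hv]; exact hF i h'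
      · have hik : i.val = k := by omega
        have hi : i = Fin.last k := by ext; simpa using hik
        have hv : ((i + 1 : Fin (k + 1)) : ℕ) = 0 := by
          rw [hi]; simp
        rw [hv, hik, hx0, ← hxk]; exact hFk
  have irrefl : ∀ a, ¬ Relation.TransGen r a a := by
    intro a h
    match a with
    | Sum.inl x => exact key x h
    | Sum.inr y =>
      cases h with
      | single hstep => exact hstep
      | tail h₁ hstep =>
        rename_i b
        cases b with
        | inr y' => exact hstep.elim
        | inl x => exact key x (Relation.TransGen.head hstep h₁)
  -- partial order
  let p : X ⊕ Y → X ⊕ Y → Prop := fun a b => a = b ∨ Relation.TransGen r a b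
  haveI : IsPartialOrder (X ⊕ Y) p :=
    { refl := fun a => Or.inl rfl
      trans := by
        rintro a b c (rfl | hab) (rfl | hbc)
        · exact Or.inl rfl
        · exact Or.inr hbc
        · exact Or.inr hab
        · exact Or.inr (hab.trans hbc)
      antisymm := by
        intro a b hab hba
        rcases hab with rfl | hab
        · rfl
        rcases hba with rfl | hba
        · rfl
        exact absurd (hab.trans hba) (irrefl a) }
  obtain ⟨s, hs_lin, hps⟩ := extend_partialOrder p
  haveI := hs_lin
  -- strict total order t
  let t : X ⊕ Y → X ⊕ Y → Prop := fun a b => s a b ∧ a ≠ b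
  have t_irrefl : ∀ a, ¬ t a a := fun a h => h.2 rfl
  have t_trans : ∀ a b c, t a b → t b c → t a c := by
    rintro a b c ⟨hab, hne⟩ ⟨hbc, hne'⟩
    refine ⟨Trans.trans hab hbc, fun h => ?_⟩
    subst h
    exact hne (Std.Antisymm.antisymm a b hab hbc)
  have t_tri : ∀ a b, a ≠ b → t a b ∨ t b a := by
    intro a b hne
    rcases Std.Total.total (r := s) a b with h | h
    · exact Or.inl ⟨h, hne⟩
    · exact Or.inr ⟨h, hne.symm⟩
  have hrt : ∀ a b, r a b → t a b := by
    intro a b hab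
    have htg : Relation.TransGen r a b := Relation.TransGen.single hab
    refine ⟨hps a b (Or.inr htg), fun h => ?_⟩
    subst h
    exact irrefl a htg
  -- rank function
  let g : X ⊕ Y → ℕ := fun a => (Finset.univ.filter (fun b => t b a)).card
  have g_mono : ∀ a b, t a b → g a < g b := by
    intro a b hab
    apply Finset.card_lt_card
    constructor
    · intro c hc
      simp only [Finset.mem_filter, Finset.mem_univ, true_and] at hc ⊢
      exact t_trans c a b hc hab
    · intro hsub
      have : a ∈ Finset.univ.filter (fun c => t c b) := by
        simp only [Finset.mem_filter, Finset.mem_univ, true_and]; exact hab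
      have := hsub this
      simp only [Finset.mem_filter, Finset.mem_univ, true_and] at this
      exact t_irrefl a this
  have g_inj : ∀ a b, g a = g b → a = b := by
    intro a b h
    by_contra hne
    rcases t_tri a b hne with h' | h'
    · exact absurd h (Nat.ne_of_lt (g_mono a b h'))
    · exact absurd h.symm (Nat.ne_of_lt (g_mono b a h'))
  -- final labelling
  refine ⟨fun a => 2 * g a + Sum.elim (fun _ => 0) (fun _ => 1) a, ?_, ?_, ?_, ?_⟩
  · intro a b h
    match a, b with
    | Sum.inl x, Sum.inl x' => simp only [Sum.elim_inl] at h; exact g_inj _ _ (by omega)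
    | Sum.inr y, Sum.inr y' => simp only [Sum.elim_inr] at h; exact g_inj _ _ (by omega)
    | Sum.inl x, Sum.inr y' => simp only [Sum.elim_inl, Sum.elim_inr] at h; omega
    | Sum.inr y, Sum.inl x' => simp only [Sum.elim_inl, Sum.elim_inr] at h; omega
  · intro x
    simp only [Sum.elim_inl]
    exact ⟨g (Sum.inl x), by omega⟩
  · intro y
    simp only [Sum.elim_inr]
    exact ⟨g (Sum.inr y), by omega⟩
  · intro x y
    have hE : E x y → 2 * g (Sum.inl x) + 0 < 2 * g (Sum.inr y) + 1 := by
      intro h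
      have := g_mono _ _ (hrt (Sum.inl x) (Sum.inr y) h)
      omega
    have hF : F y x → 2 * g (Sum.inr y) + 1 < 2 * g (Sum.inl x) + 0 := by
      intro h
      have := g_mono _ _ (hrt (Sum.inr y) (Sum.inl x) h)
      omega
    simp only [Sum.elim_inl, Sum.elim_inr]
    constructor
    · constructor
      · exact hE
      · intro hlt
        rcases hbt x y with ⟨h, _⟩ | ⟨h, _⟩
        · exact h
        · exact absurd (hF h) (by omega)
    · constructor
      · exact hF
      · intro hlt
        rcases hbt x y with ⟨h, _⟩ | ⟨h, _⟩
        · exact absurd (hE h) (by omega)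
        · exact h
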